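/- A DFA whose reversal is deterministic is minimal: if a DFA A (with all states reachable from the source and all states co-reachable to a final state) has the property that no state has two incoming transitions with the same label and there is a unique final state with no two states mapping to it ambiguously in reverse, then distinct states of A have distinct right languages, i.e., for u ≠ v there exists a string w with exactly one of δ(u,w) ∈ F, δ(v,w) ∈ F. -/
import Mathlib


/-- Extension of a partial DFA transition function to strings. -/
def runP {Q A : Type*} (δ : Q → A → Option Q) (q : Q) (w : List A) : Option Q :=
  List.foldlM δ q w


lemma runP_inj {Q A : Type*} (δ : Q → A → Option Q)
    (hrev : ∀ p p' : Q, ∀ a : A, ∀ q : Q,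
      δ p a = some q → δ p' a = some q → p = p') :
    ∀ (w : List A) (u v r : Q), runP δ u w = some r → runP δ v w = some r → u = v := by
  intro w
  induction w with
  | nil => intro u v r hu hv; simp [runP, List.foldlM] at hu hv; subst hu; subst hv; rfl
  | cons a w ih =>
      intro u v r hu hv
      simp only [runP, List.foldlM] at hu hv
      cases hu' : δ u a with
      | none => rw [hu'] at hu; simp at hu
      | some u' =>
        cases hv' : δ v a with
        | none => rw [hv'] at hv; simp at hv
        | some v' =>
          rw [hu'] at hu; rw [hv'] at hv; simp at hu hv
          have := ih u' v' r hu hv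
          subst this
          exact hrev u v a u' hu' hv'

/-- A DFA whose reversal is deterministic is minimal: if no state has two
incoming transitions with the same label, there is a unique final state `t`,
every state is reachable from the source and can reach `t`, then distinct
states have distinct right languages: for `u ≠ v` there is a string `w` such
that exactly one of `δ(u,w) ∈ F`, `δ(v,w) ∈ F` holds. -/
theorem reverse_deterministic_minimal {Q A : Type*}
    (δ : Q → A → Option Q) (s t : Q)
    (hrev : ∀ p p' : Q, ∀ a : A, ∀ q : Q,
      δ p a = some q → δ p' a = some q → p = p')
    (hreach : ∀ q : Q, ∃ w : List A, runP δ s w = some q)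
    (hco : ∀ q : Q, ∃ w : List A, runP δ q w = some t) :
    ∀ u v : Q, u ≠ v →
      ∃ w : List A, Xor' (runP δ u w = some t) (runP δ v w = some t) := by
  intro u v huv
  obtain ⟨w, hw⟩ := hco u
  refine ⟨w, Or.inl ⟨hw, fun hv => huv (runP_inj δ hrev w u v t hw hv)⟩⟩
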